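/- Let α ∈ ℝ with α ∉ {0, −1}, and let W be the truncated Coulomb (Muffin-tin) potential W(r) = α(r^{−1} − 1) for 0 < r ≤ 1 and W(r) = 0 for r > 1. Then for every w ∈ (0,1), the deflection angle satisfies θ(w) = 2 arctan( (α/(1+α)) · √(1−w²)/w ) − 2π·𝟙[α < −1]. -/

import Mathlib

open MeasureTheory Set
open scoped ENNReal

noncomputable section

/-- The integral `∫_{r₀}^∞ r^{-2} (1 - 2W(r) - w²r^{-2})^{-1/2} dr ∈ [0,∞]` appearing in
the definition of the deflection angle `θ(w) = π - 2w·(this integral)`. -/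
def thetaInt (W : ℝ → ℝ) (rz w : ℝ) : ℝ≥0∞ :=
  ∫⁻ r in Set.Ioi rz, ENNReal.ofReal (1 / (r ^ 2 * Real.sqrt (1 - 2 * W r - w ^ 2 / r ^ 2)))

/-- The deflection angle `θ(w) = π - 2w ∫_{r₀}^∞ r^{-2}(1-2W(r)-w²r^{-2})^{-1/2} dr`. -/
def deflAngle (W : ℝ → ℝ) (rz w : ℝ) : ℝ :=
  Real.pi - 2 * w * (thetaInt W rz w).toReal

/-- `rz` is the largest zero in `(0,1)` of `r ↦ 1 - 2W(r) - w²r^{-2}`. -/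
def IsLargestZero (W : ℝ → ℝ) (w rz : ℝ) : Prop :=
  rz ∈ Set.Ioo (0 : ℝ) 1 ∧ 1 - 2 * W rz - w ^ 2 / rz ^ 2 = 0 ∧
    ∀ r, rz < r → 1 - 2 * W r - w ^ 2 / r ^ 2 ≠ 0

/-- The truncated Coulomb (Muffin-tin) potential `W(r) = α(r⁻¹ - 1)` for `0 < r ≤ 1`,
`W(r) = 0` for `r > 1`. -/
def muffinTin (α : ℝ) : ℝ → ℝ := fun r => if r ≤ 1 then α * (r⁻¹ - 1) else 0

section Aux

open Filter

lemma outer_int (w : ℝ) (hw0 : 0 < w) (hw1 : w < 1) :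
    IntegrableOn (fun r => 1/(r^2 * Real.sqrt (1 - w^2/r^2))) (Ioi (1:ℝ)) ∧
    ∫ r in Ioi (1:ℝ), 1/(r^2 * Real.sqrt (1 - w^2/r^2)) = Real.arcsin w / w := by
  set g : ℝ → ℝ := fun r => -Real.arcsin (w * r⁻¹) / w with hg
  have hderiv : ∀ r ∈ Ioi (1:ℝ), HasDerivAt g (1/(r^2 * Real.sqrt (1 - w^2/r^2))) r := by
    intro r hr
    have hr1 : 1 < r := hr
    have hr0 : (0:ℝ) < r := by linarith
    have hx : w * r⁻¹ < 1 := by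
      rw [mul_inv_lt_iff₀ hr0]; linarith
    have hx0 : 0 < w * r⁻¹ := by positivity
    have h1 : HasDerivAt (fun t : ℝ => w * t⁻¹) (w * -(r^2)⁻¹) r :=
      (hasDerivAt_inv hr0.ne').const_mul w
    have h2 := ((Real.hasDerivAt_arcsin (by linarith) hx.ne).comp r h1).neg.div_const w
    have hQ : 0 < 1 - w^2/r^2 := by
      rw [sub_pos, div_lt_one (by positivity)]; nlinarith
    have hsq : 0 < Real.sqrt (1 - w^2/r^2) := Real.sqrt_pos.2 hQ
    have harg : 1 - (w*r⁻¹)^2 = 1 - w^2/r^2 := by field_simp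
    have hval : -(1 / Real.sqrt (1 - (w*r⁻¹)^2) * (w * -(r^2)⁻¹)) / w
        = 1/(r^2 * Real.sqrt (1 - w^2/r^2)) := by
      rw [harg]
      set S := Real.sqrt (1 - w^2/r^2) with hS
      have hw' : w ≠ 0 := hw0.ne'
      have hr' : r ≠ 0 := hr0.ne'
      have hs' : S ≠ 0 := hsq.ne'
      field_simp
    rw [← hval]
    simpa [hg, Function.comp] using h2
  have hnn : ∀ r ∈ Ioi (1:ℝ), 0 ≤ 1/(r^2 * Real.sqrt (1 - w^2/r^2)) := fun r _ =>
    one_div_nonneg.2 (mul_nonneg (sq_nonneg r) (Real.sqrt_nonneg _))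
  have htop : Tendsto g atTop (nhds 0) := by
    have h1 : Tendsto (fun r : ℝ => w * r⁻¹) atTop (nhds 0) := by
      simpa using tendsto_inv_atTop_zero.const_mul w
    have h2 : Tendsto (fun r : ℝ => Real.arcsin (w * r⁻¹)) atTop (nhds 0) := by
      have := (Real.continuous_arcsin.tendsto 0).comp h1
      simpa [Function.comp_def] using this
    simpa [hg] using h2.neg.div_const w
  have hc : ContinuousWithinAt g (Ici 1) 1 := by
    apply ContinuousAt.continuousWithinAt
    have h1 : ContinuousAt (fun r : ℝ => w * r⁻¹) 1 :=
      (continuousAt_inv₀ one_ne_zero).const_mul w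
    exact ((Real.continuous_arcsin.continuousAt.comp h1).neg).div_const w
  refine ⟨integrableOn_Ioi_deriv_of_nonneg hc hderiv hnn htop, ?_⟩
  rw [integral_Ioi_of_hasDerivAt_of_nonneg hc hderiv hnn htop]
  simp [hg]
  ring

lemma inner_int (α w z B : ℝ) (hw0 : 0 < w) (hz0 : 0 < z) (hz1 : z < 1)
    (hB0 : 0 < B) (hB2 : B^2 = w^2*(1+2*α)+α^2)
    (hq : w^2/z + α = B)
    (hP : ∀ r, z < r → r ≤ 1 → 0 < (1+2*α)*r^2 - 2*α*r - w^2) :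
    IntegrableOn (fun r => 1/(r^2 * Real.sqrt (1 + 2*α - 2*α/r - w^2/r^2))) (Ioc z 1) ∧
    ∫ r in Ioc z 1, 1/(r^2 * Real.sqrt (1 + 2*α - 2*α/r - w^2/r^2))
      = (Real.pi/2 - Real.arcsin ((w^2+α)/B))/w := by
  set f : ℝ → ℝ := fun r => 1/(r^2 * Real.sqrt (1 + 2*α - 2*α/r - w^2/r^2)) with hf
  set g : ℝ → ℝ := fun r => -Real.arcsin ((w^2 * r⁻¹ + α)/B)/w with hg
  have hQpos : ∀ r, z < r → r ≤ 1 → 0 < 1 + 2*α - 2*α/r - w^2/r^2 := by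
    intro r h1 h2
    have hr0 : 0 < r := hz0.trans h1
    have h3 := hP r h1 h2
    have h4 : 1 + 2*α - 2*α/r - w^2/r^2 = ((1+2*α)*r^2 - 2*α*r - w^2)/r^2 := by
      field_simp
    rw [h4]
    exact div_pos h3 (by positivity)
  have hcont : ContinuousOn g (Icc z 1) := by
    apply ContinuousOn.div_const
    apply ContinuousOn.neg
    apply Real.continuous_arcsin.comp_continuousOn
    apply ContinuousOn.div_const
    refine ContinuousOn.add (continuousOn_const.mul ?_) continuousOn_const
    exact continuousOn_inv₀.mono (fun x hx => by simpa using (hz0.trans_le hx.1).ne')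
  have hderiv : ∀ r ∈ Ioo z 1, HasDerivAt g (f r) r := by
    intro r hr
    have hr0 : 0 < r := hz0.trans hr.1
    have hQ := hQpos r hr.1 hr.2.le
    have hS0 : 0 < Real.sqrt (1 + 2*α - 2*α/r - w^2/r^2) := Real.sqrt_pos.2 hQ
    have hBx : B^2 - (w^2 * r⁻¹ + α)^2 = w^2 * (1 + 2*α - 2*α/r - w^2/r^2) := by
      rw [hB2]; field_simp; ring
    have hx2 : ((w^2 * r⁻¹ + α)/B)^2 < 1 := by
      rw [div_pow, div_lt_one (by positivity)]
      nlinarith [mul_pos (mul_pos hw0 hw0) hQ]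
    have habs := abs_lt.1 ((sq_lt_one_iff_abs_lt_one _).1 hx2)
    have h1 : HasDerivAt (fun t : ℝ => (w^2 * t⁻¹ + α)/B) ((w^2 * -(r^2)⁻¹)/B) r :=
      (((hasDerivAt_inv hr0.ne').const_mul (w^2)).add_const α).div_const B
    have h2 := ((Real.hasDerivAt_arcsin habs.1.ne' habs.2.ne).comp r h1).neg.div_const w
    have h4 : 1 - ((w^2 * r⁻¹ + α)/B)^2
        = w^2 * (1 + 2*α - 2*α/r - w^2/r^2) / B^2 := by
      rw [← hBx]; field_simp
    have hsq : Real.sqrt (1 - ((w^2 * r⁻¹ + α)/B)^2)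
        = w * Real.sqrt (1 + 2*α - 2*α/r - w^2/r^2) / B := by
      rw [h4, show w^2 * (1 + 2*α - 2*α/r - w^2/r^2) / B^2
          = (w * Real.sqrt (1 + 2*α - 2*α/r - w^2/r^2) / B)^2 by
        rw [div_pow, mul_pow, Real.sq_sqrt hQ.le], Real.sqrt_sq (by positivity)]
    have hval : -(1 / Real.sqrt (1 - ((w^2 * r⁻¹ + α)/B)^2) * ((w^2 * -(r^2)⁻¹)/B))/w
        = f r := by
      rw [hsq]
      show -(1 / (w * Real.sqrt (1 + 2*α - 2*α/r - w^2/r^2) / B) * (w^2 * -(r^2)⁻¹ / B)) / w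
          = 1/(r^2 * Real.sqrt (1 + 2*α - 2*α/r - w^2/r^2))
      generalize Real.sqrt (1 + 2*α - 2*α/r - w^2/r^2) = S at hS0
      have hw' : w ≠ 0 := hw0.ne'
      have hr' : r ≠ 0 := hr0.ne'
      have hs' : S ≠ 0 := hS0.ne'
      field_simp
    rw [← hval]
    simpa [hg, Function.comp] using h2
  have hnn : ∀ r ∈ Ioo z 1, 0 ≤ f r := fun r _ =>
    one_div_nonneg.2 (mul_nonneg (sq_nonneg r) (Real.sqrt_nonneg _))
  have hInt : IntegrableOn f (Ioc z 1) :=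
    intervalIntegral.integrableOn_deriv_of_nonneg hcont hderiv hnn
  refine ⟨hInt, ?_⟩
  have hFTC : ∫ r in z..1, f r = g 1 - g z :=
    intervalIntegral.integral_eq_sub_of_hasDeriv_right_of_le hz1.le hcont
      (fun x hx => (hderiv x hx).hasDerivWithinAt)
      ((intervalIntegrable_iff_integrableOn_Ioc_of_le hz1.le).2 hInt)
  rw [← intervalIntegral.integral_of_le hz1.le, hFTC]
  have e1 : g 1 = -Real.arcsin ((w^2+α)/B)/w := by simp [hg]
  have e2 : g z = -(Real.pi/2)/w := by
    have h5 : (w^2 * z⁻¹ + α)/B = 1 := by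
      rw [show w^2 * z⁻¹ = w^2/z from (div_eq_mul_inv _ _).symm, hq, div_self hB0.ne']
    simp [hg, h5, Real.arcsin_one]
  rw [e1, e2]; ring

lemma trig_final (α w s B : ℝ) (hα1 : α ≠ -1) (hw0 : 0 < w) (hw1 : w < 1)
    (hs0 : 0 < s) (hs2 : s^2 = 1 - w^2) (hB0 : 0 < B) (hB2 : B^2 = w^2*(1+2*α)+α^2) :
    2 * Real.arcsin ((w^2+α)/B) - 2 * Real.arcsin w =
      2 * Real.arctan ((α / (1 + α)) * (s / w)) - 2 * Real.pi * (if α < -1 then 1 else 0) := by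
  have h1w : 0 < 1 - w^2 := by nlinarith
  have h1α : (1:ℝ) + α ≠ 0 := fun h => hα1 (by linarith)
  have hx2 : ((w^2+α)/B)^2 < 1 := by
    rw [div_pow, div_lt_one (by positivity)]
    nlinarith [mul_pos (mul_pos hw0 hw0) h1w]
  have habs := abs_lt.1 ((sq_lt_one_iff_abs_lt_one _).1 hx2)
  have e1 : Real.arcsin ((w^2+α)/B) = Real.arctan ((w^2+α)/(w*s)) := by
    rw [Real.arcsin_eq_arctan ⟨habs.1, habs.2⟩]
    congr 1
    have h4 : 1 - ((w^2+α)/B)^2 = (w*s/B)^2 := by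
      have hB' : B ≠ 0 := hB0.ne'
      rw [div_pow, div_pow, mul_pow, hs2]
      field_simp
      linear_combination hB2
    rw [h4, Real.sqrt_sq (by positivity)]
    field_simp
  have e2 : Real.arcsin w = Real.arctan (w/s) := by
    rw [Real.arcsin_eq_arctan ⟨by linarith, hw1⟩]
    rw [show (1:ℝ) - w^2 = s^2 from hs2.symm, Real.sqrt_sq hs0.le]
  rw [e1, e2]
  have hrw : 2 * Real.arctan ((w^2+α)/(w*s)) - 2 * Real.arctan (w/s)
      = 2 * (Real.arctan ((w^2+α)/(w*s)) + Real.arctan (-(w/s))) := by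
    rw [Real.arctan_neg]; ring
  rw [hrw]
  have hnum : (w^2+α)/(w*s) + -(w/s) = α/(w*s) := by field_simp; ring
  have hden : 1 - (w^2+α)/(w*s) * -(w/s) = (1+α)/s^2 := by
    field_simp
    linear_combination hs2
  have harg : ((w^2+α)/(w*s) + -(w/s)) / (1 - (w^2+α)/(w*s) * -(w/s))
      = (α/(1+α)) * (s/w) := by
    rw [hnum, hden]
    field_simp
  by_cases hc : α < -1
  · have hXY : 1 < (w^2+α)/(w*s) * -(w/s) := by
      have hh : (w^2+α)/(w*s) * -(w/s) = (-(w^2+α))/s^2 := by field_simp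
      rw [hh, lt_div_iff₀ (by positivity)]
      nlinarith
    have hX : (w^2+α)/(w*s) < 0 :=
      div_neg_of_neg_of_pos (by nlinarith) (by positivity)
    rw [Real.arctan_add_eq_sub_pi hXY hX, harg]
    simp [hc]
    ring
  · have hXY : (w^2+α)/(w*s) * -(w/s) < 1 := by
      have hh : (w^2+α)/(w*s) * -(w/s) = (-(w^2+α))/s^2 := by field_simp
      rw [hh, div_lt_one (by positivity)]
      push_neg at hc
      have hgt : -1 < α := lt_of_le_of_ne hc (Ne.symm hα1)
      nlinarith
    rw [Real.arctan_add hXY, harg]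
    simp [hc]

end Aux

set_option maxHeartbeats 1000000 in
/-- For the truncated Coulomb potential with `α ∉ {0,-1}` and any
`w ∈ (0,1)`, the deflection angle is finite and equals
`2 arctan((α/(1+α))·√(1-w²)/w) - 2π·𝟙[α < -1]`. -/
theorem muffin_tin_deflection_angle_formula
    (α : ℝ) (hα0 : α ≠ 0) (hα1 : α ≠ -1)
    (r₀ : ℝ → ℝ)
    (hr₀ : ∀ w ∈ Set.Ioo (0 : ℝ) 1, IsLargestZero (muffinTin α) w (r₀ w))
    (w : ℝ) (hw : w ∈ Set.Ioo (0 : ℝ) 1) :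
    thetaInt (muffinTin α) (r₀ w) w ≠ ⊤ ∧
    deflAngle (muffinTin α) (r₀ w) w =
      2 * Real.arctan ((α / (1 + α)) * (Real.sqrt (1 - w ^ 2) / w)) -
        2 * Real.pi * (if α < -1 then 1 else 0) := by
  obtain ⟨hw0, hw1⟩ := hw
  obtain ⟨⟨hz0, hz1⟩, hzero, -⟩ := hr₀ w ⟨hw0, hw1⟩
  set z := r₀ w with hzdef
  have hw' : w ≠ 0 := hw0.ne'
  have hz' : z ≠ 0 := hz0.ne'
  have hw2 : w^2 < 1 := by nlinarith
  have h1w : (0:ℝ) < 1 - w^2 := by linarith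
  have hs0 : 0 < Real.sqrt (1 - w^2) := Real.sqrt_pos.2 h1w
  have hs2 : (Real.sqrt (1 - w^2))^2 = 1 - w^2 := Real.sq_sqrt h1w.le
  have hB2pos : 0 < w^2*(1+2*α)+α^2 := by
    nlinarith [sq_nonneg (α + w^2), mul_pos (mul_pos hw0 hw0) h1w]
  set B := Real.sqrt (w^2*(1+2*α)+α^2) with hBdef
  have hB0 : 0 < B := Real.sqrt_pos.2 hB2pos
  have hB2 : B^2 = w^2*(1+2*α)+α^2 := Real.sq_sqrt hB2pos.le
  -- the zero equation in usable form
  have hWz : muffinTin α z = α * (z⁻¹ - 1) := by simp [muffinTin, hz1.le]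
  rw [hWz] at hzero
  have e : 1 + 2*α - 2*α/z - w^2/z^2 = 0 := by linear_combination hzero
  have epoly : (1+2*α)*z^2 - 2*α*z - w^2 = 0 := by
    field_simp at e
    exact mul_left_cancel₀ hz' (by linear_combination z * e)
  have hfact : (1-z)*(2*α*z + w^2*(z+1)) = (1-w^2)*z^2 := by linear_combination -epoly
  have h2 : 0 < 2*α*z + w^2*(z+1) := by
    nlinarith [mul_pos (mul_pos hz0 hz0) h1w, hfact]
  have hsign : 0 < w^2 + α*z := by
    nlinarith [mul_pos (mul_pos hw0 hw0) (sub_pos.2 hz1)]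
  have hq : w^2/z + α = B := by
    have hsq : (w^2/z + α)^2 = B^2 := by
      rw [hB2]
      field_simp
      linear_combination (-(w^2))*epoly
    have hpos : 0 < w^2/z + α := by
      have hh : w^2/z + α = (w^2 + α*z)/z := by field_simp
      rw [hh]; exact div_pos hsign hz0
    have hfac : (w^2/z + α - B)*(w^2/z + α + B) = 0 := by linear_combination hsq
    rcases mul_eq_zero.1 hfac with h | h
    · linarith
    · exfalso; nlinarith
  have hP : ∀ r, z < r → r ≤ 1 → 0 < (1+2*α)*r^2 - 2*α*r - w^2 := by
    intro r h1r h2r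
    have hr0 : 0 < r := hz0.trans h1r
    have hfact2 : z^2*((1+2*α)*r^2-2*α*r-w^2) = (r-z)*(2*α*r*z + w^2*(r+z)) := by
      linear_combination r^2 * epoly
    have h5 : 0 < 2*α*r*z + w^2*(r+z) := by
      have hh := mul_pos hr0 h2
      have hh2 : 0 ≤ w^2*z*(1-r) :=
        mul_nonneg (mul_nonneg (sq_nonneg w) hz0.le) (by linarith)
      have key : 2*α*r*z + w^2*(r+z) = r*(2*α*z + w^2*(z+1)) + w^2*z*(1-r) := by ring
      rw [key]; linarith
    have h6 : 0 < z^2 * ((1+2*α)*r^2-2*α*r-w^2) := by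
      rw [hfact2]; exact mul_pos (by linarith) h5
    by_contra hcon
    push_neg at hcon
    nlinarith [mul_nonneg (mul_nonneg hz0.le hz0.le) (neg_nonneg.2 hcon)]
  obtain ⟨hint₁, hI₁⟩ := inner_int α w z B hw0 hz0 hz1 hB0 hB2 hq hP
  obtain ⟨hint₂, hI₂⟩ := outer_int w hw0 hw1
  have hnnae : ∀ (s : Set ℝ) (h : ℝ → ℝ),
      (0:ℝ → ℝ) ≤ᵐ[volume.restrict s] fun r => 1/(r^2 * Real.sqrt (h r)) :=
    fun s h => Filter.Eventually.of_forall fun r =>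
      one_div_nonneg.2 (mul_nonneg (sq_nonneg r) (Real.sqrt_nonneg _))
  have hL₁ : (∫⁻ r in Ioc z 1,
        ENNReal.ofReal (1 / (r^2 * Real.sqrt (1 - 2*muffinTin α r - w^2/r^2))))
      = ENNReal.ofReal ((Real.pi/2 - Real.arcsin ((w^2+α)/B))/w) := by
    rw [setLIntegral_congr_fun measurableSet_Ioc (fun r hr => ?_), ← ofReal_integral_eq_lintegral_ofReal hint₁
        (hnnae _ (fun r => 1 + 2*α - 2*α/r - w^2/r^2)), hI₁]
    have hWr : muffinTin α r = α * (r⁻¹ - 1) := by simp [muffinTin, hr.2]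
    rw [hWr, show 1 - 2*(α*(r⁻¹-1)) - w^2/r^2 = 1 + 2*α - 2*α/r - w^2/r^2 by ring]
  have hL₂ : (∫⁻ r in Ioi (1:ℝ),
        ENNReal.ofReal (1 / (r^2 * Real.sqrt (1 - 2*muffinTin α r - w^2/r^2))))
      = ENNReal.ofReal (Real.arcsin w / w) := by
    rw [setLIntegral_congr_fun measurableSet_Ioi (fun r hr => ?_), ← ofReal_integral_eq_lintegral_ofReal hint₂
        (hnnae _ (fun r => 1 - w^2/r^2)), hI₂]
    have hWr : muffinTin α r = 0 := by simp [muffinTin, not_le.2 (mem_Ioi.1 hr)]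
    rw [hWr, show 1 - 2*(0:ℝ) - w^2/r^2 = 1 - w^2/r^2 by ring]
  have hθ : thetaInt (muffinTin α) z w
      = ENNReal.ofReal ((Real.pi/2 - Real.arcsin ((w^2+α)/B))/w)
        + ENNReal.ofReal (Real.arcsin w / w) := by
    rw [thetaInt, ← Ioc_union_Ioi_eq_Ioi hz1.le,
      lintegral_union measurableSet_Ioi (Ioc_disjoint_Ioi le_rfl), ← hL₁, ← hL₂]
  constructor
  · rw [hθ]
    exact ENNReal.add_ne_top.2 ⟨ENNReal.ofReal_ne_top, ENNReal.ofReal_ne_top⟩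
  · have hI₁nn : 0 ≤ (Real.pi/2 - Real.arcsin ((w^2+α)/B))/w :=
      div_nonneg (by linarith [Real.arcsin_le_pi_div_two ((w^2+α)/B)]) hw0.le
    have hI₂nn : 0 ≤ Real.arcsin w / w :=
      div_nonneg (Real.arcsin_nonneg.2 hw0.le) hw0.le
    simp only [deflAngle]
    rw [hθ, ENNReal.toReal_add ENNReal.ofReal_ne_top ENNReal.ofReal_ne_top,
      ENNReal.toReal_ofReal hI₁nn, ENNReal.toReal_ofReal hI₂nn,
      ← trig_final α w (Real.sqrt (1-w^2)) B hα1 hw0 hw1 hs0 hs2 hB0 hB2]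
    field_simp
    ring

end
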